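/- arXiv:2011.00576 — 2 statements merged into one kernel-verified Lean document; each statement's English description precedes it below -/
import Mathlib

section
/- Let X ⊆ {0,1}^d be a finite nonempty set, x̄ ∈ X, θ̄ ∈ ℝ^d with θ̄^⊤(x̄ − x) ≥ 0 for all x ∈ X, β > 0, ψ ∈ (0,1], and let λ be a probability vector on X with Σ_{x∈X} λ_x x_i ≥ ψ for all i ∈ {1,…,d}. Define F(η) = max_{x∈X} (x̄ − x)^⊤ A_semi(λ)^{-1/2} η / ( β + θ̄^⊤(x̄ − x) ). Then: (i) |F(η)| ≤ (β ψ^{1/2})^{-1} Σ_{i=1}^d |η_i| for every η ∈ ℝ^d; and (ii) there is a universal constant c > 0 such that for η ~ N(0, I_d), F(η) is sub-Gaussian with variance proxy c·d/(β² ψ), i.e., E[ exp( s (F(η) − E F(η)) ) ] ≤ exp( c s² d / (2 β² ψ) ) for all s ∈ ℝ. (This is the sub-Gaussianity claim underlying the paper's Lemma 6, which justifies estimating the expected supremum by Monte Carlo averaging.) -/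
open MeasureTheory ProbabilityTheory

/-- The standard Gaussian measure `N(0, I_d)` on `ℝ^d`. -/
noncomputable def stdGaussian (d : ℕ) : Measure (Fin d → ℝ) :=
  Measure.pi fun _ => gaussianReal 0 1

/-- `F(η) = max_{x∈X} (x̄ - x)ᵀ A_semi(w)^{-1/2} η / (β + θ̄ᵀ(x̄ - x))`. -/
noncomputable def lagrangeSup (d : ℕ) (X : Finset (Fin d → ℝ)) (hX : X.Nonempty)
    (xb θb : Fin d → ℝ) (β : ℝ) (w : (Fin d → ℝ) → ℝ) (η : Fin d → ℝ) : ℝ :=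
  X.sup' hX fun x =>
    (∑ i, (xb i - x i) * η i / Real.sqrt (∑ y ∈ X, w y * y i)) /
      (β + ∑ i, θb i * (xb i - x i))


open Real
open scoped ENNReal NNReal

noncomputable def gauss1 : Measure ℝ := gaussianReal 0 1

instance : IsProbabilityMeasure gauss1 := by unfold gauss1; infer_instance

lemma gauss1_integral_eq (g : ℝ → ℝ) :
    ∫ x, g x ∂gauss1 = ∫ x, gaussianPDFReal 0 1 x * g x := by
  have h : gauss1 = volume.withDensity
      (fun x => ((gaussianPDFReal 0 1 x).toNNReal : ℝ≥0∞)) := by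
    rw [show gauss1 = gaussianReal 0 1 from rfl, gaussianReal_of_var_ne_zero _ one_ne_zero]
    rfl
  rw [h, integral_withDensity_eq_integral_smul
    ((measurable_gaussianPDFReal 0 1).real_toNNReal)]
  congr 1
  ext x
  rw [NNReal.smul_def, Real.coe_toNNReal _ (gaussianPDFReal_nonneg _ _ _)]
  rfl

lemma gauss1_integrable_iff (g : ℝ → ℝ) :
    Integrable g gauss1 ↔ Integrable (fun x => gaussianPDFReal 0 1 x * g x) volume := by
  have h : gauss1 = volume.withDensity
      (fun x => ((gaussianPDFReal 0 1 x).toNNReal : ℝ≥0∞)) := by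
    rw [show gauss1 = gaussianReal 0 1 from rfl, gaussianReal_of_var_ne_zero _ one_ne_zero]
    rfl
  rw [h, integrable_withDensity_iff_integrable_smul
    ((measurable_gaussianPDFReal 0 1).real_toNNReal)]
  constructor <;> intro hi <;> refine hi.congr (Filter.Eventually.of_forall fun x => ?_) <;>
    simp [NNReal.smul_def, Real.coe_toNNReal _ (gaussianPDFReal_nonneg 0 1 x)]

lemma gauss1_pt (t x : ℝ) :
    gaussianPDFReal 0 1 x * exp (t * x) =
      (Real.sqrt (2 * π))⁻¹ * (exp (t ^ 2 / 2) * exp (-(1 / 2) * (x - t) ^ 2)) := by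
  simp only [gaussianPDFReal, NNReal.coe_one, mul_one, sub_zero]
  rw [mul_assoc, ← Real.exp_add, ← Real.exp_add]
  congr 1
  ring

lemma integrable_pdf_exp (t : ℝ) :
    Integrable (fun x => gaussianPDFReal 0 1 x * exp (t * x)) volume := by
  have h := (integrable_exp_neg_mul_sq (b := 1/2) (by norm_num)).comp_sub_right t
  simp only [gauss1_pt t]
  exact (h.const_mul _).const_mul _

lemma integral_pdf_exp (t : ℝ) :
    ∫ x, gaussianPDFReal 0 1 x * exp (t * x) = exp (t ^ 2 / 2) := by
  simp only [gauss1_pt t]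
  rw [integral_const_mul, integral_const_mul]
  have h1 : ∫ x : ℝ, exp (-(1/2) * (x - t) ^ 2) = ∫ x : ℝ, exp (-(1/2) * x ^ 2) := by
    simp_rw [sub_eq_add_neg]
    exact integral_add_right_eq_self (fun x => exp (-(1/2) * x ^ 2)) (-t)
  rw [h1, integral_gaussian]
  have h2 : Real.sqrt (π / (1/2)) = Real.sqrt (2 * π) := by rw [show π / (1/2) = 2 * π by ring]
  rw [h2]
  have h3 : Real.sqrt (2 * π) ≠ 0 := by
    positivity
  field_simp

lemma integrable_exp_mul_gauss1 (t : ℝ) : Integrable (fun x => exp (t * x)) gauss1 :=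
  (gauss1_integrable_iff _).2 (integrable_pdf_exp t)

lemma integral_exp_mul_gauss1 (t : ℝ) : ∫ x, exp (t * x) ∂gauss1 = exp (t ^ 2 / 2) :=
  (gauss1_integral_eq _).trans (integral_pdf_exp t)

lemma exp_abs_le (a x : ℝ) : exp (a * |x|) ≤ exp (a * x) + exp (-(a * x)) := by
  rcases abs_cases x with ⟨h, _⟩ | ⟨h, _⟩
  · rw [h]; nlinarith [Real.exp_pos (-(a*x))]
  · rw [h, mul_neg, ← neg_mul]
    nlinarith [Real.exp_pos (a*x), Real.exp_pos (-(a*x))]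

lemma integrable_of_le_exp_abs {g : ℝ → ℝ} (hm : AEStronglyMeasurable g gauss1)
    (C a : ℝ) (h : ∀ x, |g x| ≤ C * exp (a * |x|)) : Integrable g gauss1 := by
  have hC : 0 ≤ C := by
    have h0 := (abs_nonneg (g 0)).trans (h 0)
    nlinarith [Real.exp_pos (a * |(0:ℝ)|)]
  have hint : Integrable (fun x => C * (exp (a * x) + exp (-(a * x)))) gauss1 := by
    have := ((integrable_exp_mul_gauss1 a).add
      ((integrable_exp_mul_gauss1 (-a)).congr
        (Filter.Eventually.of_forall fun x =>
          show rexp (-a * x) = rexp (-(a * x)) by rw [neg_mul]))).const_mul C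
    exact this
  refine hint.mono' hm (Filter.Eventually.of_forall fun x => ?_)
  calc ‖g x‖ = |g x| := rfl
    _ ≤ C * exp (a * |x|) := h x
    _ ≤ C * (exp (a * x) + exp (-(a * x))) :=
        mul_le_mul_of_nonneg_left (exp_abs_le a x) hC

section lip
variable {f : ℝ → ℝ} {L : ℝ}

lemma lip_continuous (hL : 0 ≤ L) (hf : ∀ a b, |f a - f b| ≤ L * |a - b|) :
    Continuous f := by
  refine LipschitzWith.continuous (K := Real.toNNReal L) ?_
  refine LipschitzWith.of_dist_le_mul fun a b => ?_
  rw [Real.dist_eq, Real.dist_eq, Real.coe_toNNReal _ hL]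
  exact hf a b

lemma lip_bound (hf : ∀ a b, |f a - f b| ≤ L * |a - b|) (x : ℝ) :
    |f x| ≤ |f 0| + L * |x| := by
  have := hf x 0
  have h2 := abs_sub_abs_le_abs_sub (f x) (f 0)
  simp only [sub_zero] at this
  linarith

lemma lip_integrable (hL : 0 ≤ L) (hf : ∀ a b, |f a - f b| ≤ L * |a - b|) :
    Integrable f gauss1 := by
  refine integrable_of_le_exp_abs ((lip_continuous hL hf).aestronglyMeasurable)
    (|f 0| + L) 1 fun x => ?_
  have h1 := lip_bound hf x
  have h2 : |x| ≤ exp (1 * |x|) := by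
    rw [one_mul]; linarith [Real.add_one_le_exp (|x|)]
  have h3 : (1:ℝ) ≤ exp (1 * |x|) := by
    rw [one_mul]; exact Real.one_le_exp (abs_nonneg x)
  have habs : 0 ≤ L * |x| := mul_nonneg hL (abs_nonneg x)
  calc |f x| ≤ |f 0| + L * |x| := h1
    _ = |f 0| * 1 + L * |x| := by ring
    _ ≤ |f 0| * exp (1 * |x|) + L * exp (1 * |x|) := by
        refine add_le_add (mul_le_mul_of_nonneg_left h3 (abs_nonneg _)) ?_
        exact mul_le_mul_of_nonneg_left h2 hL
    _ = (|f 0| + L) * exp (1 * |x|) := by ring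

lemma lip_exp_integrable (hL : 0 ≤ L) (hf : ∀ a b, |f a - f b| ≤ L * |a - b|) (s : ℝ) :
    Integrable (fun x => exp (s * f x)) gauss1 := by
  refine integrable_of_le_exp_abs
    (((Real.continuous_exp.comp ((continuous_const.mul (lip_continuous hL hf))))).aestronglyMeasurable)
    (exp (|s| * |f 0|)) (|s| * L) fun x => ?_
  rw [abs_of_pos (Real.exp_pos _), ← Real.exp_add]
  apply Real.exp_le_exp.2
  have h1 := lip_bound hf x
  calc s * f x ≤ |s * f x| := le_abs_self _
    _ = |s| * |f x| := abs_mul s (f x)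
    _ ≤ |s| * (|f 0| + L * |x|) := mul_le_mul_of_nonneg_left h1 (abs_nonneg s)
    _ = |s| * |f 0| + |s| * L * |x| := by ring

end lip

lemma oneDim {f : ℝ → ℝ} {L : ℝ} (hL : 0 ≤ L)
    (hf : ∀ a b, |f a - f b| ≤ L * |a - b|) (s : ℝ) :
    ∫ x, exp (s * (f x - ∫ y, f y ∂gauss1)) ∂gauss1 ≤ exp (s ^ 2 * L ^ 2) := by
  set m := ∫ y, f y ∂gauss1 with hm
  set Ip := ∫ x, exp (s * f x) ∂gauss1 with hIp
  set Im := ∫ x, exp (-s * f x) ∂gauss1 with hIm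
  have hfc : Continuous f := lip_continuous hL hf
  have hfint : Integrable f gauss1 := lip_integrable hL hf
  have hIp_int := lip_exp_integrable hL hf s
  have hIm_int := lip_exp_integrable hL hf (-s)
  have hIp_nonneg : 0 ≤ Ip := integral_nonneg fun x => (Real.exp_pos _).le
  -- Step 1
  have h1 : ∫ x, exp (s * (f x - m)) ∂gauss1 = Ip * exp (-(s * m)) := by
    rw [hIp, ← integral_mul_const]
    congr 1; ext x
    rw [← Real.exp_add]; congr 1; ring
  -- Step 2 (Jensen)
  have h2 : exp (-(s * m)) ≤ Im := by
    have hmean : -(s * m) = ∫ y, -s * f y ∂gauss1 := by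
      rw [integral_const_mul]; ring
    rw [hmean]
    refine ConvexOn.map_integral_le convexOn_exp Real.continuous_exp.continuousOn
      isClosed_univ (Filter.Eventually.of_forall fun x => Set.mem_univ _)
      (hfint.const_mul (-s)) ?_
    exact hIm_int.congr (Filter.Eventually.of_forall fun x => rfl)
  -- Step 3
  have h3 : Ip * Im ≤ exp (s ^ 2 * L ^ 2) := by
    classical
    set P : Measure (ℝ × ℝ) := gauss1.prod gauss1 with hP
    have hprob : IsProbabilityMeasure P := by infer_instance
    have hprod : Ip * Im = ∫ z : ℝ × ℝ, exp (s * (f z.1 - f z.2)) ∂P := by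
      rw [hIp, hIm, ← integral_prod_mul]
      congr 1; ext z
      rw [← Real.exp_add]; congr 1; ring
    -- integrability of the exponential difference terms over P
    have hint1 : Integrable (fun z : ℝ × ℝ => exp (s * (f z.1 - f z.2))) P := by
      have := (lip_exp_integrable hL hf s).mul_prod (lip_exp_integrable hL hf (-s))
      refine this.congr (Filter.Eventually.of_forall fun z => ?_)
      show exp (s * f z.1) * exp (-s * f z.2) = _
      rw [← Real.exp_add]; congr 1; ring
    have hint2 : Integrable (fun z : ℝ × ℝ => exp (-(s * (f z.1 - f z.2)))) P := by
      have := (lip_exp_integrable hL hf (-s)).mul_prod (lip_exp_integrable hL hf s)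
      refine this.congr (Filter.Eventually.of_forall fun z => ?_)
      show exp (-s * f z.1) * exp (s * f z.2) = _
      rw [← Real.exp_add]; congr 1; ring
    -- symmetry: the integral is invariant under swapping coordinates
    have hswap : ∫ z : ℝ × ℝ, exp (s * (f z.1 - f z.2)) ∂P
        = ∫ z : ℝ × ℝ, exp (-(s * (f z.1 - f z.2))) ∂P := by
      calc ∫ z : ℝ × ℝ, exp (s * (f z.1 - f z.2)) ∂P
          = ∫ z : ℝ × ℝ, exp (s * (f (Prod.swap z).1 - f (Prod.swap z).2)) ∂P := by
            rw [hP, integral_prod_swap (fun z : ℝ × ℝ => exp (s * (f z.1 - f z.2)))]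
        _ = ∫ z : ℝ × ℝ, exp (-(s * (f z.1 - f z.2))) ∂P := by
            congr 1; ext z; congr 1; simp [Prod.swap]; ring
    -- so the integral equals the integral of cosh
    have hcosh : ∫ z : ℝ × ℝ, exp (s * (f z.1 - f z.2)) ∂P
        = ∫ z : ℝ × ℝ, Real.cosh (s * (f z.1 - f z.2)) ∂P := by
      have : ∫ z : ℝ × ℝ, Real.cosh (s * (f z.1 - f z.2)) ∂P
          = (∫ z : ℝ × ℝ, exp (s * (f z.1 - f z.2)) ∂P
             + ∫ z : ℝ × ℝ, exp (-(s * (f z.1 - f z.2))) ∂P) / 2 := by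
        rw [← integral_add hint1 hint2, ← integral_div]
        congr 1; ext z; rw [Real.cosh_eq]
      rw [this, ← hswap]; ring
    -- compare with cosh of the linear function
    have hlin_int1 : Integrable (fun z : ℝ × ℝ => exp (s * L * (z.1 - z.2))) P := by
      have := (integrable_exp_mul_gauss1 (s * L)).mul_prod (integrable_exp_mul_gauss1 (-(s * L)))
      refine this.congr (Filter.Eventually.of_forall fun z => ?_)
      show exp (s * L * z.1) * exp (-(s * L) * z.2) = _
      rw [← Real.exp_add]; congr 1; ring
    have hlin_int2 : Integrable (fun z : ℝ × ℝ => exp (-(s * L * (z.1 - z.2)))) P := by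
      have := (integrable_exp_mul_gauss1 (-(s * L))).mul_prod (integrable_exp_mul_gauss1 (s * L))
      refine this.congr (Filter.Eventually.of_forall fun z => ?_)
      show exp (-(s * L) * z.1) * exp (s * L * z.2) = _
      rw [← Real.exp_add]; congr 1; ring
    have hlin_cosh_int : Integrable (fun z : ℝ × ℝ => Real.cosh (s * L * (z.1 - z.2))) P := by
      refine ((hlin_int1.add hlin_int2).div_const 2).congr
        (Filter.Eventually.of_forall fun z => ?_)
      show (rexp (s * L * (z.1 - z.2)) + rexp (-(s * L * (z.1 - z.2)))) / 2
        = cosh (s * L * (z.1 - z.2))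
      rw [Real.cosh_eq]
    have hmono : ∫ z : ℝ × ℝ, Real.cosh (s * (f z.1 - f z.2)) ∂P
        ≤ ∫ z : ℝ × ℝ, Real.cosh (s * L * (z.1 - z.2)) ∂P := by
      refine integral_mono_of_nonneg
        (Filter.Eventually.of_forall fun z => ?_) hlin_cosh_int
        (Filter.Eventually.of_forall fun z => ?_)
      · exact (Real.cosh_pos _).le
      · refine Real.cosh_le_cosh.2 ?_
        calc |s * (f z.1 - f z.2)| = |s| * |f z.1 - f z.2| := abs_mul _ _
          _ ≤ |s| * (L * |z.1 - z.2|) :=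
            mul_le_mul_of_nonneg_left (hf z.1 z.2) (abs_nonneg s)
          _ = |s| * |L| * |z.1 - z.2| := by rw [abs_of_nonneg hL]; ring
          _ = |s * L * (z.1 - z.2)| := by rw [abs_mul, abs_mul]
    have hlin_val : ∫ z : ℝ × ℝ, Real.cosh (s * L * (z.1 - z.2)) ∂P
        = exp ((s * L) ^ 2) := by
      have e1 : ∫ z : ℝ × ℝ, exp (s * L * (z.1 - z.2)) ∂P = exp ((s * L) ^ 2) := by
        have : (fun z : ℝ × ℝ => exp (s * L * (z.1 - z.2)))
            = fun z : ℝ × ℝ => exp (s * L * z.1) * exp (-(s * L) * z.2) := by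
          ext z; rw [← Real.exp_add]; congr 1; ring
        rw [hP, this, integral_prod_mul (f := fun x : ℝ => rexp (s * L * x))
          (g := fun y : ℝ => rexp (-(s * L) * y)), integral_exp_mul_gauss1,
          integral_exp_mul_gauss1, ← Real.exp_add]
        congr 1; ring
      have e2 : ∫ z : ℝ × ℝ, exp (-(s * L * (z.1 - z.2))) ∂P = exp ((s * L) ^ 2) := by
        have : (fun z : ℝ × ℝ => exp (-(s * L * (z.1 - z.2))))
            = fun z : ℝ × ℝ => exp (-(s * L) * z.1) * exp (s * L * z.2) := by
          ext z; rw [← Real.exp_add]; congr 1; ring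
        rw [hP, this, integral_prod_mul (f := fun x : ℝ => rexp (-(s * L) * x))
          (g := fun y : ℝ => rexp (s * L * y)), integral_exp_mul_gauss1,
          integral_exp_mul_gauss1, ← Real.exp_add]
        congr 1; ring
      have : (fun z : ℝ × ℝ => Real.cosh (s * L * (z.1 - z.2)))
          = fun z : ℝ × ℝ => (exp (s * L * (z.1 - z.2)) + exp (-(s * L * (z.1 - z.2)))) / 2 := by
        ext z; rw [Real.cosh_eq]
      rw [this, integral_div, integral_add hlin_int1 hlin_int2, e1, e2]
      ring
    calc Ip * Im = ∫ z : ℝ × ℝ, Real.cosh (s * (f z.1 - f z.2)) ∂P := by rw [hprod, hcosh]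
      _ ≤ exp ((s * L) ^ 2) := hlin_val ▸ hmono
      _ = exp (s ^ 2 * L ^ 2) := by rw [mul_pow]
  calc ∫ x, exp (s * (f x - m)) ∂gauss1 = Ip * exp (-(s * m)) := h1
    _ ≤ Ip * Im := mul_le_mul_of_nonneg_left h2 hIp_nonneg
    _ ≤ exp (s ^ 2 * L ^ 2) := h3

instance (d : ℕ) : IsProbabilityMeasure (stdGaussian d) := by
  unfold _root_.stdGaussian; infer_instance

lemma stdGaussian_eq_pi (d : ℕ) : stdGaussian d = Measure.pi fun _ : Fin d => gauss1 := rfl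

/-- product of integrable functions is integrable on pi gaussian -/
lemma integrable_pi_prod : ∀ (n : ℕ) (f : Fin n → ℝ → ℝ),
    (∀ i, Integrable (f i) gauss1) →
    Integrable (fun x : Fin n → ℝ => ∏ i, f i (x i)) (stdGaussian n) := by
  intro n
  induction n with
  | zero =>
    intro f hf
    simp only [Finset.univ_eq_empty, Finset.prod_empty]
    exact integrable_const 1
  | succ n ih =>
    intro f hf
    have mp := (measurePreserving_piFinSuccAbove (fun _ : Fin (n + 1) => gauss1) 0).symm
    rw [stdGaussian_eq_pi, ← mp.integrable_comp_emb (MeasurableEquiv.measurableEmbedding _)]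
    simp_rw [MeasurableEquiv.piFinSuccAbove_symm_apply, Fin.insertNthEquiv,
      Fin.prod_univ_succ, Fin.insertNth_zero]
    simp only [Fin.zero_succAbove, Function.comp_def, Equiv.coe_fn_mk,
      Fin.cons_zero, Fin.cons_succ]
    have h2 : Integrable (fun x : Fin n → ℝ => ∏ i, f i.succ (x i)) (stdGaussian n) :=
      ih _ (fun i => hf i.succ)
    exact Integrable.mul_prod (hf 0) h2

lemma integrable_pi_of_le {d : ℕ} {g : (Fin d → ℝ) → ℝ}
    (hm : AEStronglyMeasurable g (stdGaussian d)) (C a : ℝ) (hC : 0 ≤ C)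
    (h : ∀ η, |g η| ≤ C * exp (a * ∑ i, |η i|)) : Integrable g (stdGaussian d) := by
  have hint : Integrable
      (fun η : Fin d → ℝ => C * ∏ i, (exp (a * η i) + exp (-(a * η i)))) (stdGaussian d) :=
    (integrable_pi_prod d (fun _ x => exp (a * x) + exp (-(a * x)))
      (fun _ => (integrable_exp_mul_gauss1 a).add
        ((integrable_exp_mul_gauss1 (-a)).congr
          (Filter.Eventually.of_forall fun x =>
            show rexp (-a * x) = rexp (-(a * x)) by rw [neg_mul])))).const_mul C
  refine hint.mono' hm (Filter.Eventually.of_forall fun η => ?_)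
  have hprod : exp (a * ∑ i, |η i|) = ∏ i, exp (a * |η i|) := by
    rw [← Real.exp_sum, Finset.mul_sum]
  have hle : ∏ i, exp (a * |η i|) ≤ ∏ i, (exp (a * η i) + exp (-(a * η i))) :=
    Finset.prod_le_prod (fun i _ => (Real.exp_pos _).le) (fun i _ => exp_abs_le a (η i))
  have hRnn : 0 ≤ C * ∏ i, (exp (a * η i) + exp (-(a * η i))) := by
    refine mul_nonneg hC (Finset.prod_nonneg fun i _ => ?_)
    positivity
  calc ‖g η‖ = |g η| := rfl
    _ ≤ C * exp (a * ∑ i, |η i|) := h η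
    _ ≤ C * ∏ i, (exp (a * η i) + exp (-(a * η i))) := by
        rw [hprod]; exact mul_le_mul_of_nonneg_left hle hC

section pilip
variable {d : ℕ} {F : (Fin d → ℝ) → ℝ} {L : ℝ}

lemma pilip_continuous (hL : 0 ≤ L)
    (hF : ∀ η η', |F η - F η'| ≤ L * ∑ i, |η i - η' i|) : Continuous F := by
  refine LipschitzWith.continuous (K := Real.toNNReal (L * d)) ?_
  refine LipschitzWith.of_dist_le_mul fun η η' => ?_
  rw [Real.coe_toNNReal _ (by positivity), Real.dist_eq]
  calc |F η - F η'| ≤ L * ∑ i, |η i - η' i| := hF η η'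
    _ ≤ L * ∑ _i : Fin d, dist η η' := by
        refine mul_le_mul_of_nonneg_left (Finset.sum_le_sum fun i _ => ?_) hL
        rw [← Real.dist_eq]
        exact dist_le_pi_dist η η' i
    _ = L * d * dist η η' := by
        rw [Finset.sum_const, Finset.card_univ, Fintype.card_fin]
        rw [nsmul_eq_mul]; ring

lemma pilip_bound (hF : ∀ η η', |F η - F η'| ≤ L * ∑ i, |η i - η' i|) (η : Fin d → ℝ) :
    |F η| ≤ |F 0| + L * ∑ i, |η i| := by
  have h1 := hF η 0
  have h2 := abs_sub_abs_le_abs_sub (F η) (F 0)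
  simp only [Pi.zero_apply, sub_zero] at h1
  linarith

lemma pilip_exp_integrable (hL : 0 ≤ L)
    (hF : ∀ η η', |F η - F η'| ≤ L * ∑ i, |η i - η' i|) (s c : ℝ) :
    Integrable (fun η => exp (s * (F η - c))) (stdGaussian d) := by
  refine integrable_pi_of_le
    ((Real.continuous_exp.comp
      ((continuous_const.mul ((pilip_continuous hL hF).sub continuous_const)))).aestronglyMeasurable)
    (exp (|s| * (|F 0| + |c|))) (|s| * L) (Real.exp_pos _).le fun η => ?_
  rw [abs_of_pos (Real.exp_pos _), ← Real.exp_add]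
  apply Real.exp_le_exp.2
  have h1 := pilip_bound hF η
  calc s * (F η - c) ≤ |s * (F η - c)| := le_abs_self _
    _ = |s| * |F η - c| := abs_mul _ _
    _ ≤ |s| * (|F η| + |c|) := mul_le_mul_of_nonneg_left (abs_sub _ _) (abs_nonneg s)
    _ ≤ |s| * ((|F 0| + L * ∑ i, |η i|) + |c|) := by
        refine mul_le_mul_of_nonneg_left (by linarith) (abs_nonneg s)
    _ = |s| * (|F 0| + |c|) + |s| * L * ∑ i, |η i| := by ring

end pilip

lemma tensor : ∀ (d : ℕ) (F : (Fin d → ℝ) → ℝ) (L : ℝ), 0 ≤ L →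
    (∀ η η', |F η - F η'| ≤ L * ∑ i, |η i - η' i|) → ∀ s : ℝ,
    (∫ η, exp (s * (F η - ∫ η', F η' ∂stdGaussian d)) ∂stdGaussian d)
      ≤ exp (s ^ 2 * L ^ 2 * d) := by
  intro d
  induction d with
  | zero =>
    intro F L hL hF s
    have hconst : ∀ η : Fin 0 → ℝ, F η = F default := fun η => congrArg F (Subsingleton.elim _ _)
    have hmean : (∫ η', F η' ∂stdGaussian 0) = F default := by
      rw [show (fun η' : Fin 0 → ℝ => F η') = fun _ => F default from funext hconst]
      simp
    rw [hmean]
    have : (fun η : Fin 0 → ℝ => exp (s * (F η - F default))) = fun _ => 1 := by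
      funext η; rw [hconst η]; simp
    rw [this]
    simp
  | succ n ih =>
    intro F L hL hF s
    have mp := measurePreserving_piFinSuccAbove (fun _ : Fin (n + 1) => gauss1) 0
    set e := MeasurableEquiv.piFinSuccAbove (fun _ : Fin (n + 1) => ℝ) 0 with he
    have mps := MeasurePreserving.symm e mp
    have hesymm : ∀ (p : ℝ × (Fin n → ℝ)), e.symm p = Fin.cons p.1 p.2 := by
      intro p
      simp [he, MeasurableEquiv.piFinSuccAbove_symm_apply, Fin.insertNthEquiv,
        Fin.insertNth_zero]
    set m := ∫ η, F η ∂stdGaussian (n + 1) with hm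
    set G : (Fin n → ℝ) → ℝ := fun ζ => ∫ a, F (Fin.cons a ζ) ∂gauss1 with hG
    -- coordinate Lipschitz in the first coordinate
    have hF1 : ∀ (ζ : Fin n → ℝ) (a b : ℝ),
        |F (Fin.cons a ζ) - F (Fin.cons b ζ)| ≤ L * |a - b| := by
      intro ζ a b
      have h := hF (Fin.cons a ζ) (Fin.cons b ζ)
      rw [Fin.sum_univ_succ] at h
      simpa [Fin.cons_zero, Fin.cons_succ] using h
    -- Lipschitz in the remaining coordinates, after the first is fixed
    have hFrest : ∀ (a : ℝ) (ζ ζ' : Fin n → ℝ),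
        |F (Fin.cons a ζ) - F (Fin.cons a ζ')| ≤ L * ∑ i, |ζ i - ζ' i| := by
      intro a ζ ζ'
      have h := hF (Fin.cons a ζ) (Fin.cons a ζ')
      rw [Fin.sum_univ_succ] at h
      simpa [Fin.cons_zero, Fin.cons_succ] using h
    have hG_lip : ∀ ζ ζ', |G ζ - G ζ'| ≤ L * ∑ i, |ζ i - ζ' i| := by
      intro ζ ζ'
      have hsub : G ζ - G ζ' = ∫ a, (F (Fin.cons a ζ) - F (Fin.cons a ζ')) ∂gauss1 := by
        rw [hG, ← integral_sub (lip_integrable hL (hF1 ζ)) (lip_integrable hL (hF1 ζ'))]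
      rw [hsub]
      have := norm_integral_le_of_norm_le_const (μ := gauss1)
        (f := fun a => F (Fin.cons a ζ) - F (Fin.cons a ζ'))
        (C := L * ∑ i, |ζ i - ζ' i|)
        (Filter.Eventually.of_forall fun a => hFrest a ζ ζ')
      simpa using this
    -- mean compatibility
    have hFint : Integrable F (stdGaussian (n + 1)) := by
      have h0 : Integrable (fun η => exp (0 * (F η - 0))) (stdGaussian (n + 1)) :=
        pilip_exp_integrable hL hF 0 0
      refine integrable_pi_of_le (pilip_continuous hL hF).aestronglyMeasurable
        (|F 0| + L) 1 (by positivity) fun η => ?_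
      have h1 := pilip_bound hF η
      have h2 : ∑ i, |η i| ≤ exp (1 * ∑ i, |η i|) := by
        rw [one_mul]
        have : (0:ℝ) ≤ ∑ i, |η i| := Finset.sum_nonneg fun i _ => abs_nonneg _
        linarith [Real.add_one_le_exp (∑ i, |η i|)]
      have h3 : (1:ℝ) ≤ exp (1 * ∑ i, |η i|) := by
        rw [one_mul]
        exact Real.one_le_exp (Finset.sum_nonneg fun i _ => abs_nonneg _)
      calc |F η| ≤ |F 0| + L * ∑ i, |η i| := h1
        _ = |F 0| * 1 + L * ∑ i, |η i| := by ring
        _ ≤ |F 0| * exp (1 * ∑ i, |η i|) + L * exp (1 * ∑ i, |η i|) := by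
            refine add_le_add (mul_le_mul_of_nonneg_left h3 (abs_nonneg _)) ?_
            exact mul_le_mul_of_nonneg_left h2 hL
        _ = (|F 0| + L) * exp (1 * ∑ i, |η i|) := by ring
    have hFint_prod : Integrable (fun p : ℝ × (Fin n → ℝ) => F (e.symm p))
        (gauss1.prod (Measure.pi fun _ : Fin n => gauss1)) := by
      have := (mps.integrable_comp_emb (MeasurableEquiv.measurableEmbedding _)).2 hFint
      exact this
    have hmean : m = ∫ ζ, G ζ ∂stdGaussian n := by
      rw [hm, stdGaussian_eq_pi, ← mps.integral_comp']
      rw [integral_prod_symm _ hFint_prod]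
      simp_rw [hesymm]
      rfl
    -- main integrand over the product
    have hHint : Integrable (fun η => exp (s * (F η - m))) (stdGaussian (n + 1)) :=
      pilip_exp_integrable hL hF s m
    have hHint_prod : Integrable (fun p : ℝ × (Fin n → ℝ) => exp (s * (F (e.symm p) - m)))
        (gauss1.prod (Measure.pi fun _ : Fin n => gauss1)) :=
      (mps.integrable_comp_emb (MeasurableEquiv.measurableEmbedding _)).2 hHint
    have hsplit : (∫ η, exp (s * (F η - m)) ∂stdGaussian (n + 1))
        = ∫ ζ, (∫ a, exp (s * (F (Fin.cons a ζ) - m)) ∂gauss1) ∂stdGaussian n := by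
      rw [stdGaussian_eq_pi, ← mps.integral_comp']
      rw [integral_prod_symm _ hHint_prod]
      simp_rw [hesymm]
      rfl
    -- G lipschitz → exp (s * (G - m)) integrable
    have hGint : Integrable (fun ζ => exp (s * (G ζ - m))) (stdGaussian n) :=
      pilip_exp_integrable hL hG_lip s m
    -- inner bound
    have hinner : ∀ ζ, (∫ a, exp (s * (F (Fin.cons a ζ) - m)) ∂gauss1)
        ≤ exp (s ^ 2 * L ^ 2) * exp (s * (G ζ - m)) := by
      intro ζ
      have hfac : (fun a => exp (s * (F (Fin.cons a ζ) - m)))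
          = fun a => exp (s * (F (Fin.cons a ζ) - G ζ)) * exp (s * (G ζ - m)) := by
        funext a; rw [← Real.exp_add]; congr 1; ring
      rw [hfac, integral_mul_const]
      have h1 : (∫ a, exp (s * (F (Fin.cons a ζ) - G ζ)) ∂gauss1) ≤ exp (s ^ 2 * L ^ 2) := by
        have := oneDim hL (hF1 ζ) s
        exact this
      exact mul_le_mul_of_nonneg_right h1 (Real.exp_pos _).le
    -- outer bound
    have houter : (∫ ζ, (∫ a, exp (s * (F (Fin.cons a ζ) - m)) ∂gauss1) ∂stdGaussian n)
        ≤ ∫ ζ, exp (s ^ 2 * L ^ 2) * exp (s * (G ζ - m)) ∂stdGaussian n := by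
      refine integral_mono_of_nonneg (Filter.Eventually.of_forall fun ζ => ?_)
        (hGint.const_mul _) (Filter.Eventually.of_forall fun ζ => hinner ζ)
      exact integral_nonneg fun a => (Real.exp_pos _).le
    have hfinal := ih G L hL hG_lip s
    rw [← hmean] at hfinal
    calc (∫ η, exp (s * (F η - m)) ∂stdGaussian (n + 1))
        = ∫ ζ, (∫ a, exp (s * (F (Fin.cons a ζ) - m)) ∂gauss1) ∂stdGaussian n := hsplit
      _ ≤ ∫ ζ, exp (s ^ 2 * L ^ 2) * exp (s * (G ζ - m)) ∂stdGaussian n := houter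
      _ = exp (s ^ 2 * L ^ 2) * ∫ ζ, exp (s * (G ζ - m)) ∂stdGaussian n := integral_const_mul _ _
      _ ≤ exp (s ^ 2 * L ^ 2) * exp (s ^ 2 * L ^ 2 * n) :=
          mul_le_mul_of_nonneg_left hfinal (Real.exp_pos _).le
      _ = exp (s ^ 2 * L ^ 2 * (n + 1)) := by rw [← Real.exp_add]; congr 1; ring
      _ = exp (s ^ 2 * L ^ 2 * (n + 1 : ℕ)) := by push_cast; ring_nf

lemma abs_sup'_sub_sup'_le {α : Type*} (X : Finset α) (hX : X.Nonempty) (f g : α → ℝ)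
    (c : ℝ) (h : ∀ x ∈ X, |f x - g x| ≤ c) : |X.sup' hX f - X.sup' hX g| ≤ c := by
  rw [abs_sub_le_iff]
  constructor
  · rw [sub_le_iff_le_add]
    refine Finset.sup'_le _ _ fun x hx => ?_
    have h1 := (abs_sub_le_iff.1 (h x hx)).1
    have h2 := Finset.le_sup' g hx
    linarith
  · rw [sub_le_iff_le_add]
    refine Finset.sup'_le _ _ fun x hx => ?_
    have h1 := (abs_sub_le_iff.1 (h x hx)).2
    have h2 := Finset.le_sup' f hx
    linarith

lemma lag_lip {d : ℕ} {X : Finset (Fin d → ℝ)} (hX : X.Nonempty)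
    (xb θb : Fin d → ℝ) (β ψ : ℝ) (w : (Fin d → ℝ) → ℝ)
    (hcube : ∀ x ∈ X, ∀ i, x i = 0 ∨ x i = 1) (hxb : xb ∈ X)
    (hgap : ∀ x ∈ X, 0 ≤ ∑ i, θb i * (xb i - x i))
    (hβ : 0 < β) (hψ : 0 < ψ)
    (hwlb : ∀ i : Fin d, ψ ≤ ∑ x ∈ X, w x * x i) (η η' : Fin d → ℝ) :
    |lagrangeSup d X hX xb θb β w η - lagrangeSup d X hX xb θb β w η'|
      ≤ (β * Real.sqrt ψ)⁻¹ * ∑ i, |η i - η' i| := by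
  have hsψ : 0 < Real.sqrt ψ := Real.sqrt_pos.2 hψ
  have hS : (0:ℝ) ≤ ∑ i, |η i - η' i| := Finset.sum_nonneg fun i _ => abs_nonneg _
  unfold lagrangeSup
  refine abs_sup'_sub_sup'_le _ hX _ _ _ fun x hx => ?_
  have hD : 0 < β + ∑ i, θb i * (xb i - x i) := by linarith [hgap x hx]
  rw [div_sub_div_same]
  have hnum : ((∑ i, (xb i - x i) * η i / Real.sqrt (∑ y ∈ X, w y * y i))
      - ∑ i, (xb i - x i) * η' i / Real.sqrt (∑ y ∈ X, w y * y i))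
      = ∑ i, (xb i - x i) * (η i - η' i) / Real.sqrt (∑ y ∈ X, w y * y i) := by
    rw [← Finset.sum_sub_distrib]
    refine Finset.sum_congr rfl fun i _ => ?_
    rw [div_sub_div_same, ← mul_sub]
  rw [hnum, abs_div, abs_of_pos hD]
  have h1 : |∑ i, (xb i - x i) * (η i - η' i) / Real.sqrt (∑ y ∈ X, w y * y i)|
      ≤ (Real.sqrt ψ)⁻¹ * ∑ i, |η i - η' i| := by
    calc |∑ i, (xb i - x i) * (η i - η' i) / Real.sqrt (∑ y ∈ X, w y * y i)|
        ≤ ∑ i, |(xb i - x i) * (η i - η' i) / Real.sqrt (∑ y ∈ X, w y * y i)| :=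
          Finset.abs_sum_le_sum_abs _ _
      _ ≤ ∑ i, (Real.sqrt ψ)⁻¹ * |η i - η' i| := by
          refine Finset.sum_le_sum fun i _ => ?_
          have hxi : |xb i - x i| ≤ 1 := by
            rcases hcube x hx i with h | h <;> rcases hcube xb hxb i with h' | h' <;>
              rw [h, h'] <;> norm_num
          have hsqi : Real.sqrt ψ ≤ Real.sqrt (∑ y ∈ X, w y * y i) :=
            Real.sqrt_le_sqrt (hwlb i)
          have habs : |Real.sqrt (∑ y ∈ X, w y * y i)| = Real.sqrt (∑ y ∈ X, w y * y i) :=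
            abs_of_nonneg (Real.sqrt_nonneg _)
          rw [abs_div, abs_mul, habs]
          calc |xb i - x i| * |η i - η' i| / Real.sqrt (∑ y ∈ X, w y * y i)
              ≤ |η i - η' i| / Real.sqrt ψ := by
                refine div_le_div₀ (abs_nonneg _) ?_ hsψ hsqi
                nlinarith [abs_nonneg (η i - η' i)]
            _ = (Real.sqrt ψ)⁻¹ * |η i - η' i| := by rw [div_eq_inv_mul]
      _ = (Real.sqrt ψ)⁻¹ * ∑ i, |η i - η' i| := by rw [Finset.mul_sum]
  calc |∑ i, (xb i - x i) * (η i - η' i) / Real.sqrt (∑ y ∈ X, w y * y i)|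
      / (β + ∑ i, θb i * (xb i - x i))
      ≤ ((Real.sqrt ψ)⁻¹ * ∑ i, |η i - η' i|) / β := by
        refine div_le_div₀ (by positivity) h1 hβ (by linarith [hgap x hx])
    _ = (β * Real.sqrt ψ)⁻¹ * ∑ i, |η i - η' i| := by
        rw [mul_inv, div_eq_mul_inv]; ring

lemma lag_zero {d : ℕ} {X : Finset (Fin d → ℝ)} (hX : X.Nonempty)
    (xb θb : Fin d → ℝ) (β : ℝ) (w : (Fin d → ℝ) → ℝ) :
    lagrangeSup d X hX xb θb β w 0 = 0 := by
  unfold lagrangeSup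
  have : (fun x : Fin d → ℝ =>
      (∑ i, (xb i - x i) * (0:Fin d → ℝ) i / Real.sqrt (∑ y ∈ X, w y * y i)) /
        (β + ∑ i, θb i * (xb i - x i))) = fun _ => (0:ℝ) := by
    funext x; simp
  rw [this, Finset.sup'_const]

/-- **Sub-Gaussianity of the supremum (underlying Lemma 6).** For `X ⊆ {0,1}^d`,
`x̄ ∈ X`, nonnegative estimated gaps, `β > 0`, `ψ ∈ (0,1]` and a probability vector `w`
whose design entries are all at least `ψ`: (i) `|F(η)| ≤ (β ψ^{1/2})⁻¹ Σ_i |η_i|`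
pointwise; and (ii) for a universal constant `c > 0`, `F(η)` with `η ~ N(0, I_d)` is
sub-Gaussian with variance proxy `c d / (β² ψ)`. -/
theorem lagrangeSup_bounded_and_subgaussian :
    (∀ (d : ℕ) (X : Finset (Fin d → ℝ)) (hX : X.Nonempty)
        (xb θb : Fin d → ℝ) (β ψ : ℝ) (w : (Fin d → ℝ) → ℝ),
      (∀ x ∈ X, ∀ i, x i = 0 ∨ x i = 1) → xb ∈ X →
      (∀ x ∈ X, 0 ≤ ∑ i, θb i * (xb i - x i)) →
      0 < β → 0 < ψ → ψ ≤ 1 →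
      (∀ x ∈ X, 0 ≤ w x) → (∑ x ∈ X, w x = 1) →
      (∀ i : Fin d, ψ ≤ ∑ x ∈ X, w x * x i) →
      ∀ η : Fin d → ℝ,
        |lagrangeSup d X hX xb θb β w η| ≤ (β * Real.sqrt ψ)⁻¹ * ∑ i, |η i|) ∧
    (∃ c : ℝ, 0 < c ∧
      ∀ (d : ℕ) (X : Finset (Fin d → ℝ)) (hX : X.Nonempty)
        (xb θb : Fin d → ℝ) (β ψ : ℝ) (w : (Fin d → ℝ) → ℝ),
      (∀ x ∈ X, ∀ i, x i = 0 ∨ x i = 1) → xb ∈ X →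
      (∀ x ∈ X, 0 ≤ ∑ i, θb i * (xb i - x i)) →
      0 < β → 0 < ψ → ψ ≤ 1 →
      (∀ x ∈ X, 0 ≤ w x) → (∑ x ∈ X, w x = 1) →
      (∀ i : Fin d, ψ ≤ ∑ x ∈ X, w x * x i) →
      ∀ s : ℝ,
        (∫ η, Real.exp (s * (lagrangeSup d X hX xb θb β w η -
            ∫ η', lagrangeSup d X hX xb θb β w η' ∂ stdGaussian d)) ∂ stdGaussian d) ≤
          Real.exp (c * s ^ 2 * d / (2 * β ^ 2 * ψ))) := by
  constructor
  · intro d X hX xb θb β ψ w hcube hxb hgap hβ hψ hψ1 hw0 hw1 hwlb η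
    have h := lag_lip hX xb θb β ψ w hcube hxb hgap hβ hψ hwlb η 0
    rw [lag_zero hX xb θb β w] at h
    simpa using h
  · refine ⟨2, by norm_num, ?_⟩
    intro d X hX xb θb β ψ w hcube hxb hgap hβ hψ hψ1 hw0 hw1 hwlb s
    have hL : 0 ≤ (β * Real.sqrt ψ)⁻¹ := by positivity
    have hlip : ∀ η η', |lagrangeSup d X hX xb θb β w η - lagrangeSup d X hX xb θb β w η'|
        ≤ (β * Real.sqrt ψ)⁻¹ * ∑ i, |η i - η' i| :=
      lag_lip hX xb θb β ψ w hcube hxb hgap hβ hψ hwlb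
    have ht := tensor d (lagrangeSup d X hX xb θb β w) ((β * Real.sqrt ψ)⁻¹) hL hlip s
    have heq : s ^ 2 * ((β * Real.sqrt ψ)⁻¹) ^ 2 * (d : ℝ)
        = 2 * s ^ 2 * (d : ℝ) / (2 * β ^ 2 * ψ) := by
      have h2 : ((β * Real.sqrt ψ)⁻¹) ^ 2 = (β ^ 2 * ψ)⁻¹ := by
        rw [inv_pow, mul_pow, Real.sq_sqrt hψ.le]
      rw [h2]
      have hb : (β : ℝ) ^ 2 * ψ ≠ 0 := by positivity
      field_simp
    rw [heq] at ht
    exact ht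
end

section
/- Let X = {x₁,…,x_m} ⊆ {0,1}^d be finite with ∪_{j} supp(x_j) = {1,…,d}, let x̄ ∈ X, θ̄ ∈ ℝ^d, β > 0 with β + θ̄^⊤(x̄ − x) > 0 for all x ∈ X, τ ≥ 0, and assume the vectors (x̄ − x)/(β + θ̄^⊤(x̄ − x)), x ∈ X, are pairwise distinct. On the open set O = { λ ∈ ℝ^m : Σ_{j=1}^m λ_j x_{j,i} > 0 for all i ∈ {1,…,d} } define L(λ) = τ Σ_{j=1}^m θ̄^⊤(x̄ − x_j) λ_j + E_η[ max_{x∈X} (x̄ − x)^⊤ A_semi(λ)^{-1/2} η / (β + θ̄^⊤(x̄ − x)) ], where A_semi(λ)^{-1/2} is the diagonal matrix with entries (Σ_j λ_j x_{j,i})^{-1/2}. Then for every λ ∈ O: for η ~ N(0, I_d) the maximizer x̃(η) of x ↦ (x̄ − x)^⊤ A_semi(λ)^{-1/2} η / (β + θ̄^⊤(x̄ − x)) over X is almost surely unique, L is differentiable at λ, and ∂L/∂λ_i(λ) = τ θ̄^⊤(x̄ − x_i) − (1/2) E_η[ (β + θ̄^⊤(x̄ − x̃(η)))^{-1} Σ_{k=1}^d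 (x̄ − x̃(η))_k x_{i,k} η_k (Σ_{j : x_{j,k}=1} λ_j)^{-3/2} ]. (This is the paper's Lemma 7, differentiability of the Lagrangian objective used in stochastic Frank–Wolfe.) -/
open MeasureTheory ProbabilityTheory

/-- The ratio process `j ↦ (x̄ - x_j)ᵀ A_semi(λ)^{-1/2} η / (β + θ̄ᵀ(x̄ - x_j))`. -/
noncomputable def ratioProc (d m : ℕ) (x : Fin m → Fin d → ℝ) (b : Fin m)
    (θb : Fin d → ℝ) (β : ℝ) (lam : Fin m → ℝ) (η : Fin d → ℝ) (j : Fin m) : ℝ :=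
  (∑ i, (x b i - x j i) * η i / Real.sqrt (∑ j', lam j' * x j' i)) /
    (β + ∑ i, θb i * (x b i - x j i))

/-- The Lagrangian objective
`L(λ) = τ Σ_j θ̄ᵀ(x̄ - x_j) λ_j + E_η[max_j (x̄ - x_j)ᵀ A_semi(λ)^{-1/2} η / (β + θ̄ᵀ(x̄ - x_j))]`. -/
noncomputable def lagrangian (d m : ℕ) (x : Fin m → Fin d → ℝ) (b : Fin m)
    (θb : Fin d → ℝ) (β τ : ℝ) (lam : Fin m → ℝ) : ℝ :=
  τ * ∑ j, (∑ i, θb i * (x b i - x j i)) * lam j +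
    ∫ η, Finset.univ.sup' ⟨b, Finset.mem_univ b⟩ (ratioProc d m x b θb β lam η)
      ∂ stdGaussian d

lemma lem7_integrable_abs_gaussian : Integrable (fun t : ℝ => |t|) (gaussianReal 0 1) := by
  rw [gaussianReal_of_var_ne_zero _ one_ne_zero]
  rw [integrable_withDensity_iff (measurable_gaussianPDF _ _)
    (Filter.Eventually.of_forall fun t => ENNReal.ofReal_lt_top)]
  have h1 : Integrable (fun t : ℝ => |t * Real.exp (-(1/2) * t ^ 2)|) :=
    (integrable_mul_exp_neg_mul_sq (by norm_num : (0:ℝ) < 1/2)).abs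
  have h2 : Integrable (fun t : ℝ => (Real.sqrt (2 * Real.pi))⁻¹ * |t * Real.exp (-(1/2) * t ^ 2)|) :=
    h1.const_mul _
  refine h2.congr (Filter.Eventually.of_forall fun t => ?_)
  show (√(2 * Real.pi))⁻¹ * |t * Real.exp (-(1/2) * t ^ 2)| = |t| * (gaussianPDF 0 1 t).toReal
  rw [gaussianPDF, ENNReal.toReal_ofReal (gaussianPDFReal_nonneg _ _ _), gaussianPDFReal]
  simp only [NNReal.coe_one, mul_one, sub_zero]
  rw [abs_mul, abs_of_nonneg (Real.exp_nonneg _)]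
  ring_nf

instance lem7_prob (d : ℕ) : IsProbabilityMeasure (stdGaussian d) := by
  unfold _root_.stdGaussian; infer_instance

lemma lem7_integrable_pi_prod {n : ℕ} (μ : Fin n → Measure ℝ) [∀ i, IsProbabilityMeasure (μ i)]
    (f : Fin n → ℝ → ℝ) (hf : ∀ i, Integrable (f i) (μ i)) :
    Integrable (fun x : Fin n → ℝ => ∏ i, f i (x i)) (Measure.pi μ) := by
  induction n with
  | zero => simp only [Finset.univ_eq_empty, Finset.prod_empty]
            exact integrable_const _
  | succ n ih =>
      have hmp := (measurePreserving_piFinSuccAbove μ 0).symm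
      rw [← hmp.integrable_comp_emb (MeasurableEquiv.measurableEmbedding _)]
      simp_rw [MeasurableEquiv.piFinSuccAbove_symm_apply, Fin.insertNthEquiv,
        Fin.prod_univ_succ, Fin.insertNth_zero]
      simp only [Fin.zero_succAbove, Function.comp_def, Fin.cons_zero, Fin.cons_succ,
        Equiv.coe_fn_mk]
      have h2 : Integrable (fun y : Fin n → ℝ => ∏ j, f (Fin.succ j) (y j))
          (Measure.pi fun j => μ (Fin.succ j)) := ih _ _ (fun i => hf _)
      exact Integrable.mul_prod (hf 0) h2

lemma lem7_integrable_abs_eval (d : ℕ) (k : Fin d) :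
    Integrable (fun η : Fin d → ℝ => |η k|) (stdGaussian d) := by
  have h : ∀ η : Fin d → ℝ, |η k| = ∏ i, (fun i t => if i = k then |t| else 1) i (η i) := by
    intro η
    rw [Finset.prod_eq_single k (by intro i _ h; simp [h]) (by simp)]
    simp
  simp_rw [h]
  apply lem7_integrable_pi_prod (fun _ => gaussianReal 0 1) (fun i t => if i = k then |t| else 1)
  intro i
  by_cases hik : i = k
  · simpa [hik] using lem7_integrable_abs_gaussian
  · simpa [hik] using (integrable_const (1:ℝ) (μ := gaussianReal 0 1))

lemma lem7_stdGaussian_ac (d : ℕ) : stdGaussian d ≪ (volume : Measure (Fin d → ℝ)) := by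
  have : (volume : Measure (Fin d → ℝ)) = Measure.pi fun _ => (volume : Measure ℝ) := by
    exact MeasureTheory.volume_pi
  rw [this]
  unfold _root_.stdGaussian
  clear this
  induction d with
  | zero =>
      intro s hs
      have hsub : s ⊆ Set.univ := Set.subset_univ s
      rcases Set.eq_empty_or_nonempty s with h | h
      · simp [h]
      · exfalso
        have : s = Set.univ := by
          ext y
          simp only [Set.mem_univ, iff_true]
          obtain ⟨z, hz⟩ := h
          have : y = z := Subsingleton.elim y z
          rwa [this]
        rw [this] at hs
        simp at hs
  | succ n ih =>
      have e := MeasurableEquiv.piFinSuccAbove (fun _ : Fin (n+1) => ℝ) 0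
      have h1 := (measurePreserving_piFinSuccAbove (fun _ : Fin (n+1) => gaussianReal 0 1) 0).symm
      have h2 := (measurePreserving_piFinSuccAbove (fun _ : Fin (n+1) => (volume : Measure ℝ)) 0).symm
      rw [← h1.map_eq, ← h2.map_eq]
      have hac : ((gaussianReal 0 1).prod (Measure.pi fun _ : Fin n => gaussianReal 0 1)) ≪
          ((volume : Measure ℝ).prod (Measure.pi fun _ : Fin n => (volume : Measure ℝ))) :=
        Measure.AbsolutelyContinuous.prod (gaussianReal_absolutelyContinuous _ one_ne_zero) ih
      exact hac.map ((MeasurableEquiv.piFinSuccAbove (fun _ : Fin (n+1) => ℝ) 0).symm).measurable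

lemma lem7_hyperplane_null (d : ℕ) (v : Fin d → ℝ) (hv : v ≠ 0) :
    stdGaussian d {η : Fin d → ℝ | ∑ k, v k * η k = 0} = 0 := by
  obtain ⟨k₀, hk₀⟩ : ∃ k, v k ≠ 0 := by
    by_contra h
    push_neg at h
    exact hv (funext h)
  set φ : (Fin d → ℝ) →ₗ[ℝ] ℝ :=
    { toFun := fun η => ∑ k, v k * η k
      map_add' := by intro a b; simp [mul_add, Finset.sum_add_distrib]
      map_smul' := by intro c a; simp only [Finset.mul_sum, smul_eq_mul, Pi.smul_apply, RingHom.id_apply]; exact Finset.sum_congr rfl fun i _ => by ring }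
  have hker : (LinearMap.ker φ : Set (Fin d → ℝ)) = {η | ∑ k, v k * η k = 0} := by
    ext η; simp [φ, LinearMap.mem_ker]
  have hne : LinearMap.ker φ ≠ ⊤ := by
    intro h
    have : φ (Pi.single k₀ 1) = 0 := by
      rw [← LinearMap.mem_ker, h]; trivial
    simp only [φ, LinearMap.coe_mk, AddHom.coe_mk] at this
    rw [Finset.sum_eq_single k₀ (by intro i _ hik; simp [hik]) (by simp)] at this
    simp at this
    exact hk₀ this
  apply lem7_stdGaussian_ac
  rw [← hker]
  exact Measure.addHaar_submodule _ _ hne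


lemma lem7_abs_sup'_sub_sup'_le {m : ℕ} (ne : (Finset.univ : Finset (Fin m)).Nonempty)
    (f g : Fin m → ℝ) (B : ℝ) (h : ∀ j, |f j - g j| ≤ B) :
    |Finset.univ.sup' ne f - Finset.univ.sup' ne g| ≤ B := by
  rw [abs_le]
  constructor
  · rw [neg_le, neg_sub, sub_le_iff_le_add]
    apply Finset.sup'_le
    intro j _
    have h1 := (abs_le.1 (h j)).1
    have h2 : f j ≤ Finset.univ.sup' ne f := Finset.le_sup' f (Finset.mem_univ j)
    linarith
  · rw [sub_le_iff_le_add]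
    apply Finset.sup'_le
    intro j _
    have h1 := (abs_le.1 (h j)).2
    have h2 : g j ≤ Finset.univ.sup' ne g := Finset.le_sup' g (Finset.mem_univ j)
    linarith

lemma lem7_sqrt_inv_lip {δ a b : ℝ} (hδ : 0 < δ) (ha : δ ≤ a) (hb : δ ≤ b) :
    |(Real.sqrt a)⁻¹ - (Real.sqrt b)⁻¹| ≤ |a - b| / (2 * Real.sqrt δ * δ) := by
  have hsδ : 0 < Real.sqrt δ := Real.sqrt_pos.2 hδ
  have hsa : Real.sqrt δ ≤ Real.sqrt a := Real.sqrt_le_sqrt ha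
  have hsb : Real.sqrt δ ≤ Real.sqrt b := Real.sqrt_le_sqrt hb
  have hsa0 : 0 < Real.sqrt a := lt_of_lt_of_le hsδ hsa
  have hsb0 : 0 < Real.sqrt b := lt_of_lt_of_le hsδ hsb
  have key : (Real.sqrt a)⁻¹ - (Real.sqrt b)⁻¹ =
      (Real.sqrt b - Real.sqrt a) / (Real.sqrt a * Real.sqrt b) := by
    field_simp
  rw [key, abs_div, abs_of_pos (mul_pos hsa0 hsb0)]
  have hdiff : |Real.sqrt b - Real.sqrt a| * (Real.sqrt b + Real.sqrt a) = |b - a| := by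
    rw [← abs_of_pos (by positivity : (0:ℝ) < Real.sqrt b + Real.sqrt a), ← abs_mul]
    have : (Real.sqrt b - Real.sqrt a) * (Real.sqrt b + Real.sqrt a) = b - a := by
      have h1 : Real.sqrt b * Real.sqrt b = b := Real.mul_self_sqrt (le_trans hδ.le hb)
      have h2 : Real.sqrt a * Real.sqrt a = a := Real.mul_self_sqrt (le_trans hδ.le ha)
      ring_nf
      nlinarith [h1, h2]
    rw [this]
  have hnum : |Real.sqrt b - Real.sqrt a| ≤ |b - a| / (2 * Real.sqrt δ) := by
    rw [le_div_iff₀ (by positivity)]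
    calc |Real.sqrt b - Real.sqrt a| * (2 * Real.sqrt δ)
        ≤ |Real.sqrt b - Real.sqrt a| * (Real.sqrt b + Real.sqrt a) := by
          apply mul_le_mul_of_nonneg_left (by linarith) (abs_nonneg _)
      _ = |b - a| := hdiff
    
  calc |Real.sqrt b - Real.sqrt a| / (Real.sqrt a * Real.sqrt b)
      ≤ (|b - a| / (2 * Real.sqrt δ)) / (Real.sqrt a * Real.sqrt b) := by
        gcongr
    _ ≤ (|b - a| / (2 * Real.sqrt δ)) / (Real.sqrt δ * Real.sqrt δ) := by
        gcongr <;> first | positivity | exact hsa | exact hsb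
    _ = |a - b| / (2 * Real.sqrt δ * δ) := by
        rw [Real.mul_self_sqrt hδ.le, abs_sub_comm]
        rw [div_div]

lemma lem7_hasDerivAt_sqrt_inv {t0 : ℝ} (ht : 0 < t0) :
    HasDerivAt (fun t => (Real.sqrt t)⁻¹) (-(1/2) * (t0 * Real.sqrt t0)⁻¹) t0 := by
  have hs : HasDerivAt Real.sqrt (1 / (2 * Real.sqrt t0)) t0 := Real.hasDerivAt_sqrt ht.ne'
  have hsne : Real.sqrt t0 ≠ 0 := (Real.sqrt_pos.2 ht).ne'
  have := hs.inv hsne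
  refine this.congr_deriv ?_
  rw [Real.sq_sqrt ht.le]
  field_simp

lemma lem7_rpow_three_halves {s : ℝ} (hs : 0 < s) :
    s ^ ((3:ℝ)/2) = s * Real.sqrt s := by
  have : ((3:ℝ)/2) = 1 + 1/2 := by norm_num
  rw [this, Real.rpow_add hs, Real.rpow_one, Real.sqrt_eq_rpow]

/-- coefficient vector (x̄ - x_j)/D_j -/
noncomputable def lem7cf (d m : ℕ) (x : Fin m → Fin d → ℝ) (b : Fin m) (θb : Fin d → ℝ)
    (β : ℝ) (j : Fin m) (k : Fin d) : ℝ :=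
  (x b k - x j k) / (β + ∑ i, θb i * (x b i - x j i))

/-- design sums -/
def lem7sf (d m : ℕ) (x : Fin m → Fin d → ℝ) (ν : Fin m → ℝ) (k : Fin d) : ℝ :=
  ∑ j, ν j * x j k

/-- ratio process, rewritten -/
noncomputable def lem7rf (d m : ℕ) (x : Fin m → Fin d → ℝ) (b : Fin m) (θb : Fin d → ℝ)
    (β : ℝ) (ν : Fin m → ℝ) (η : Fin d → ℝ) (j : Fin m) : ℝ :=
  ∑ k, lem7cf d m x b θb β j k * η k / Real.sqrt (lem7sf d m x ν k)

/-- the linear functional ν ↦ ∑ j ν j x j k -/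
noncomputable def lem7sL (d m : ℕ) (x : Fin m → Fin d → ℝ) (k : Fin d) :
    (Fin m → ℝ) →L[ℝ] ℝ :=
  ∑ j, (x j k) • ContinuousLinearMap.proj j

/-- candidate derivative of the j-th branch at lam -/
noncomputable def lem7G (d m : ℕ) (x : Fin m → Fin d → ℝ) (b : Fin m) (θb : Fin d → ℝ)
    (β : ℝ) (lam : Fin m → ℝ) (j : Fin m) (η : Fin d → ℝ) : (Fin m → ℝ) →L[ℝ] ℝ :=
  ∑ k, (lem7cf d m x b θb β j k * η k) •
    ((-(1/2) * ((lem7sf d m x lam k) * Real.sqrt (lem7sf d m x lam k))⁻¹) • lem7sL d m x k)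

lemma lem7sL_apply (d m : ℕ) (x : Fin m → Fin d → ℝ) (k : Fin d) (ν : Fin m → ℝ) :
    lem7sL d m x k ν = lem7sf d m x ν k := by
  simp only [lem7sL, lem7sf, ContinuousLinearMap.coe_sum', Finset.sum_apply,
    ContinuousLinearMap.coe_smul', Pi.smul_apply, ContinuousLinearMap.proj_apply, smul_eq_mul]
  exact Finset.sum_congr rfl fun j _ => mul_comm _ _

lemma lem7ratio_eq (d m : ℕ) (x : Fin m → Fin d → ℝ) (b : Fin m) (θb : Fin d → ℝ)
    (β : ℝ) (ν : Fin m → ℝ) (η : Fin d → ℝ) (j : Fin m) :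
    ratioProc d m x b θb β ν η j = lem7rf d m x b θb β ν η j := by
  unfold ratioProc lem7rf lem7cf lem7sf
  rw [Finset.sum_div]
  exact Finset.sum_congr rfl fun k _ => by ring

lemma lem7G_apply (d m : ℕ) (x : Fin m → Fin d → ℝ) (b : Fin m) (θb : Fin d → ℝ)
    (β : ℝ) (lam : Fin m → ℝ) (j : Fin m) (η : Fin d → ℝ) (v : Fin m → ℝ) :
    lem7G d m x b θb β lam j η v =
      ∑ k, (lem7cf d m x b θb β j k * η k) *
        ((-(1/2) * ((lem7sf d m x lam k) * Real.sqrt (lem7sf d m x lam k))⁻¹) *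
          lem7sf d m x v k) := by
  simp only [lem7G, ContinuousLinearMap.coe_sum', Finset.sum_apply,
    ContinuousLinearMap.coe_smul', Pi.smul_apply, smul_eq_mul]
  exact Finset.sum_congr rfl fun k _ => by rw [lem7sL_apply]

lemma lem7_hasFDerivAt_rf (d m : ℕ) (x : Fin m → Fin d → ℝ) (b : Fin m) (θb : Fin d → ℝ)
    (β : ℝ) (lam : Fin m → ℝ) (hpos : ∀ k, 0 < lem7sf d m x lam k)
    (η : Fin d → ℝ) (j : Fin m) :
    HasFDerivAt (fun ν => lem7rf d m x b θb β ν η j) (lem7G d m x b θb β lam j η) lam := by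
  unfold lem7rf lem7G
  apply HasFDerivAt.fun_sum
  intro k _
  have h1 : HasFDerivAt (fun ν => lem7sf d m x ν k) (lem7sL d m x k) lam :=
    (lem7sL d m x k).hasFDerivAt.congr_of_eventuallyEq
      (Filter.Eventually.of_forall fun ν => (lem7sL_apply d m x k ν).symm)
  have h2 := lem7_hasDerivAt_sqrt_inv (hpos k)
  have h3 := h2.comp_hasFDerivAt lam h1
  have h4 := h3.const_mul (lem7cf d m x b θb β j k * η k)
  have heq : (fun ν => lem7cf d m x b θb β j k * η k / Real.sqrt (lem7sf d m x ν k)) =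
      fun ν => lem7cf d m x b θb β j k * η k *
        (((fun t => (Real.sqrt t)⁻¹) ∘ fun ν' => lem7sf d m x ν' k) ν) := by
    funext ν
    simp [div_eq_mul_inv, Function.comp]
  rw [heq]
  exact h4

lemma lem7_cont_rf_eta (d m : ℕ) (x : Fin m → Fin d → ℝ) (b : Fin m) (θb : Fin d → ℝ)
    (β : ℝ) (ν : Fin m → ℝ) (j : Fin m) :
    Continuous (fun η : Fin d → ℝ => lem7rf d m x b θb β ν η j) := by
  unfold lem7rf
  exact continuous_finset_sum _ fun k _ =>
    ((continuous_const.mul (continuous_apply k)).div_const _)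

lemma lem7_meas_G (d m : ℕ) (x : Fin m → Fin d → ℝ) (b : Fin m) (θb : Fin d → ℝ)
    (β : ℝ) (lam : Fin m → ℝ) (j : Fin m) :
    Measurable (fun η : Fin d → ℝ => lem7G d m x b θb β lam j η) := by
  unfold lem7G
  apply Finset.measurable_sum
  intro k _
  exact (measurable_const.mul (measurable_pi_apply k)).smul_const _

noncomputable def lem7argmax {m : ℕ} (b : Fin m) (r : Fin m → ℝ) : Fin m :=
  (Finset.univ.filter fun j => ∀ j', r j' ≤ r j).min' (by
    obtain ⟨j, _, hj⟩ := Finset.exists_max_image Finset.univ r ⟨b, Finset.mem_univ b⟩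
    exact ⟨j, Finset.mem_filter.2 ⟨Finset.mem_univ _, fun j' => hj j' (Finset.mem_univ _)⟩⟩)

lemma lem7argmax_spec {m : ℕ} (b : Fin m) (r : Fin m → ℝ) :
    ∀ j', r j' ≤ r (lem7argmax b r) := by
  have h := Finset.min'_mem (Finset.univ.filter fun j => ∀ j', r j' ≤ r j)
    (by
      obtain ⟨j, _, hj⟩ := Finset.exists_max_image Finset.univ r ⟨b, Finset.mem_univ b⟩
      exact ⟨j, Finset.mem_filter.2 ⟨Finset.mem_univ _, fun j' => hj j' (Finset.mem_univ _)⟩⟩)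
  exact (Finset.mem_filter.1 h).2

lemma lem7argmax_eq_iff {m : ℕ} (b : Fin m) (r : Fin m → ℝ) (j : Fin m) :
    lem7argmax b r = j ↔
      (∀ j', r j' ≤ r j) ∧ ∀ j'', (∀ j', r j' ≤ r j'') → j ≤ j'' := by
  constructor
  · rintro rfl
    refine ⟨lem7argmax_spec b r, fun j'' hj'' => ?_⟩
    exact Finset.min'_le _ _ (Finset.mem_filter.2 ⟨Finset.mem_univ _, hj''⟩)
  · rintro ⟨h1, h2⟩
    apply le_antisymm
    · exact Finset.min'_le _ _ (Finset.mem_filter.2 ⟨Finset.mem_univ _, h1⟩)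
    · exact Finset.le_min' _ _ _ fun y hy => h2 y (Finset.mem_filter.1 hy).2


lemma lem7G_single (d m : ℕ) (x : Fin m → Fin d → ℝ) (b : Fin m) (θb : Fin d → ℝ)
    (β : ℝ) (lam : Fin m → ℝ) (hpos : ∀ k, 0 < lem7sf d m x lam k)
    (j i : Fin m) (hD : 0 < β + ∑ i', θb i' * (x b i' - x j i')) (η : Fin d → ℝ) :
    lem7G d m x b θb β lam j η (Pi.single i 1) =
      -(1/2) * ((β + ∑ k, θb k * (x b k - x j k))⁻¹ *
        ∑ k, (x b k - x j k) * x i k * η k / (∑ l, lam l * x l k) ^ ((3:ℝ)/2)) := by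
  rw [lem7G_apply]
  have hsing : ∀ k, lem7sf d m x (Pi.single i 1) k = x i k := by
    intro k
    unfold lem7sf
    rw [Finset.sum_eq_single i (fun j' _ hji => by rw [Pi.single_eq_of_ne hji]; ring)
      (fun h => absurd (Finset.mem_univ i) h)]
    rw [Pi.single_eq_same]; ring
  have hterm : ∀ k, (lem7cf d m x b θb β j k * η k) *
      ((-(1/2) * ((lem7sf d m x lam k) * Real.sqrt (lem7sf d m x lam k))⁻¹) *
        lem7sf d m x (Pi.single i 1) k) =
      -(1/2) * ((β + ∑ i', θb i' * (x b i' - x j i'))⁻¹ *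
        ((x b k - x j k) * x i k * η k / (∑ l, lam l * x l k) ^ ((3:ℝ)/2))) := by
    intro k
    rw [hsing k]
    have h32 : (∑ l, lam l * x l k) ^ ((3:ℝ)/2) =
        lem7sf d m x lam k * Real.sqrt (lem7sf d m x lam k) := by
      have := lem7_rpow_three_halves (hpos k)
      simpa [lem7sf] using this
    rw [h32]
    unfold lem7cf
    have hDne : (β + ∑ i', θb i' * (x b i' - x j i')) ≠ 0 := ne_of_gt hD
    have hs := hpos k
    have hsq : (0:ℝ) < Real.sqrt (lem7sf d m x lam k) := Real.sqrt_pos.2 hs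
    field_simp
  rw [Finset.sum_congr rfl fun k _ => hterm k, ← Finset.mul_sum, ← Finset.mul_sum]

/-- **Lemma 7 (differentiability of the Lagrangian objective).** On the open set of
`λ ∈ ℝ^m` whose design entries are all positive, the maximizer `x̃(η)` of the ratio
process is a.s. unique, `L` is differentiable, and
`∂L/∂λ_i = τ θ̄ᵀ(x̄ - x_i) - (1/2) E_η[(β + θ̄ᵀ(x̄ - x̃(η)))⁻¹
  Σ_k (x̄ - x̃(η))_k x_{i,k} η_k (Σ_{j : x_{j,k}=1} λ_j)^{-3/2}]`. -/
theorem lagrangian_differentiable (d m : ℕ) (x : Fin m → Fin d → ℝ) (b : Fin m)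
    (θb : Fin d → ℝ) (β τ : ℝ)
    (h01 : ∀ j i, x j i = 0 ∨ x j i = 1)
    (hxinj : Function.Injective x)
    (hcov : ∀ i : Fin d, ∃ j, x j i = 1)
    (hβ : 0 < β)
    (hgap : ∀ j, 0 < β + ∑ i, θb i * (x b i - x j i))
    (hτ : 0 ≤ τ)
    (hdistinct : Function.Injective fun j => fun i =>
      (x b i - x j i) / (β + ∑ i', θb i' * (x b i' - x j i')))
    (lam : Fin m → ℝ) (hlam : ∀ i : Fin d, 0 < ∑ j, lam j * x j i) :
    (∀ᵐ η ∂ stdGaussian d, ∃! j : Fin m, ∀ j' : Fin m,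
        ratioProc d m x b θb β lam η j' ≤ ratioProc d m x b θb β lam η j) ∧
    DifferentiableAt ℝ (lagrangian d m x b θb β τ) lam ∧
    ∃ xt : (Fin d → ℝ) → Fin m,
      (∀ᵐ η ∂ stdGaussian d, ∀ j' : Fin m,
        ratioProc d m x b θb β lam η j' ≤ ratioProc d m x b θb β lam η (xt η)) ∧
      ∀ i : Fin m,
        fderiv ℝ (lagrangian d m x b θb β τ) lam (Pi.single i 1) =
          τ * (∑ k, θb k * (x b k - x i k)) -
            (1 / 2) * ∫ η,
              (β + ∑ k, θb k * (x b k - x (xt η) k))⁻¹ *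
                ∑ k, (x b k - x (xt η) k) * x i k * η k /
                  (∑ l, lam l * x l k) ^ ((3 : ℝ) / 2)
              ∂ stdGaussian d := by
  classical
  set μ := stdGaussian d with hmudef
  have neU : (Finset.univ : Finset (Fin m)).Nonempty := ⟨b, Finset.mem_univ b⟩
  set c := lem7cf d m x b θb β with hc
  set rf := lem7rf d m x b θb β with hrfdef
  set sf := lem7sf d m x with hsfdef
  set G := lem7G d m x b θb β lam with hGdef
  set xt : (Fin d → ℝ) → Fin m := fun η => lem7argmax b (rf lam η) with hxtdef
  have hspos : ∀ k, 0 < sf lam k := fun k => hlam k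
  have hsqpos : ∀ k, 0 < Real.sqrt (sf lam k) := fun k => Real.sqrt_pos.2 (hspos k)
  have hre : ∀ ν η j, ratioProc d m x b θb β ν η j = rf ν η j := fun ν η j =>
    lem7ratio_eq d m x b θb β ν η j
  set F : (Fin m → ℝ) → (Fin d → ℝ) → ℝ := fun ν η => Finset.univ.sup' neU (rf ν η) with hFdef
  have hsup : ∀ ν η, Finset.univ.sup' ⟨b, Finset.mem_univ b⟩ (ratioProc d m x b θb β ν η)
      = F ν η := fun ν η => Finset.sup'_congr _ rfl fun j _ => hre ν η j
  have hdiffb : ∀ η j, HasFDerivAt (fun ν => rf ν η j) (G j η) lam := fun η j =>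
    lem7_hasFDerivAt_rf d m x b θb β lam hspos η j
  have hmaxxt : ∀ η j', rf lam η j' ≤ rf lam η (xt η) := fun η =>
    lem7argmax_spec b (rf lam η)
  -- a.e. distinct values
  have hane : ∀ᵐ η ∂μ, ∀ j j' : Fin m, j ≠ j' → rf lam η j ≠ rf lam η j' := by
    rw [MeasureTheory.ae_all_iff]
    intro j
    rw [MeasureTheory.ae_all_iff]
    intro j'
    by_cases hjj : j = j'
    · subst hjj
      filter_upwards with η hne
      exact absurd rfl hne
    · have hcd : ∃ k, c j k ≠ c j' k := by
        by_contra hcon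
        push_neg at hcon
        refine hjj (hdistinct ?_)
        funext k
        exact hcon k
      obtain ⟨k0, hk0⟩ := hcd
      set u : Fin d → ℝ := fun k => (c j k - c j' k) / Real.sqrt (sf lam k) with hu
      have hune : u ≠ 0 := by
        intro h0
        have h1 := congrFun h0 k0
        simp only [hu, Pi.zero_apply] at h1
        rcases div_eq_zero_iff.1 h1 with h | h
        · exact hk0 (sub_eq_zero.1 h)
        · exact (hsqpos k0).ne' h
      have hnull := lem7_hyperplane_null d u hune
      have hsub : {η : Fin d → ℝ | rf lam η j = rf lam η j'} ⊆
          {η : Fin d → ℝ | ∑ k, u k * η k = 0} := by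
        intro η hη
        simp only [Set.mem_setOf_eq] at hη ⊢
        have heq : ∑ k, u k * η k = rf lam η j - rf lam η j' := by
          rw [hrfdef]
          unfold lem7rf
          rw [← Finset.sum_sub_distrib]
          refine Finset.sum_congr rfl fun k _ => ?_
          simp only [hu]
          rw [div_mul_eq_mul_div, sub_mul, sub_div]
        rw [heq, hη, sub_self]
      have hz : μ {η : Fin d → ℝ | rf lam η j = rf lam η j'} = 0 :=
        measure_mono_null hsub hnull
      rw [MeasureTheory.ae_iff]
      convert hz using 2
      ext η
      simp
      exact fun _ => hjj
  -- a.e. derivative of F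
  have haediff : ∀ᵐ η ∂μ, HasFDerivAt (fun ν => F ν η) (G (xt η) η) lam := by
    filter_upwards [hane] with η hdist
    have hstrict : ∀ j', j' ≠ xt η → rf lam η j' < rf lam η (xt η) := fun j' hne =>
      lt_of_le_of_ne (hmaxxt η j') (hdist j' (xt η) hne)
    have hev : ∀ᶠ ν in nhds lam, ∀ j', rf ν η j' ≤ rf ν η (xt η) := by
      rw [Filter.eventually_all]
      intro j'
      by_cases hj : j' = xt η
      · subst hj
        exact Filter.Eventually.of_forall fun ν => le_refl _
      · have hc1 : ContinuousAt (fun ν => rf ν η j') lam := (hdiffb η j').continuousAt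
        have hc2 : ContinuousAt (fun ν => rf ν η (xt η)) lam := (hdiffb η (xt η)).continuousAt
        exact (hc1.eventually_lt hc2 (hstrict j' hj)).mono fun ν h => h.le
    have heqF : (fun ν => F ν η) =ᶠ[nhds lam] fun ν => rf ν η (xt η) := by
      filter_upwards [hev] with ν hν
      exact le_antisymm (Finset.sup'_le _ _ fun j' _ => hν j')
        (Finset.le_sup' _ (Finset.mem_univ (xt η)))
    exact (hdiffb η (xt η)).congr_of_eventuallyEq heqF
  -- ball where design sums stay above half their value
  have hUopen : IsOpen {ν : Fin m → ℝ | ∀ k, sf lam k / 2 < sf ν k} := by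
    have hU : {ν : Fin m → ℝ | ∀ k, sf lam k / 2 < sf ν k} =
        ⋂ k, (fun ν => sf ν k) ⁻¹' Set.Ioi (sf lam k / 2) := by
      ext ν; simp
    rw [hU]
    refine isOpen_iInter_of_finite fun k => IsOpen.preimage ?_ isOpen_Ioi
    have : Continuous fun ν : Fin m → ℝ => lem7sf d m x ν k := by
      unfold lem7sf
      exact continuous_finset_sum _ fun j _ => (continuous_apply j).mul continuous_const
    exact this
  obtain ⟨ε, hε, hball⟩ := Metric.isOpen_iff.1 hUopen lam (fun k => by
    have := hspos k; linarith)
  -- Lipschitz bound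
  set bound : (Fin d → ℝ) → ℝ := fun η => ∑ j : Fin m, ∑ k,
    |c j k| * ((m : ℝ) / (2 * Real.sqrt (sf lam k / 2) * (sf lam k / 2))) * |η k| with hbdef
  have hbound_nonneg : ∀ η, 0 ≤ bound η := fun η =>
    Finset.sum_nonneg fun j _ => Finset.sum_nonneg fun k _ => by
      have := hspos k; positivity
  have hsdiff : ∀ (ν ν' : Fin m → ℝ) k, |sf ν k - sf ν' k| ≤ m * dist ν ν' := by
    intro ν ν' k
    have h1 : sf ν k - sf ν' k = ∑ j, (ν j - ν' j) * x j k := by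
      rw [hsfdef]; unfold lem7sf
      rw [← Finset.sum_sub_distrib]
      exact Finset.sum_congr rfl fun j _ => by ring
    rw [h1]
    calc |∑ j, (ν j - ν' j) * x j k| ≤ ∑ j, |(ν j - ν' j) * x j k| :=
          Finset.abs_sum_le_sum_abs _ _
      _ ≤ ∑ _j : Fin m, dist ν ν' * 1 := by
          refine Finset.sum_le_sum fun j _ => ?_
          rw [abs_mul]
          refine mul_le_mul ?_ ?_ (abs_nonneg _) dist_nonneg
          · rw [← Real.dist_eq]; exact dist_le_pi_dist ν ν' j
          · rcases h01 j k with h | h <;> simp [h]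
      _ = m * dist ν ν' := by simp [mul_comm]
  have hrdiff : ∀ η j, ∀ ν ∈ Metric.ball lam ε, ∀ ν' ∈ Metric.ball lam ε,
      |rf ν η j - rf ν' η j| ≤
        (∑ k, |c j k| * ((m : ℝ) / (2 * Real.sqrt (sf lam k / 2) * (sf lam k / 2))) * |η k|)
          * dist ν ν' := by
    intro η j ν hν ν' hν'
    have hνU := hball hν
    have hν'U := hball hν'
    have h1 : rf ν η j - rf ν' η j =
        ∑ k, c j k * η k * ((Real.sqrt (sf ν k))⁻¹ - (Real.sqrt (sf ν' k))⁻¹) := by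
      rw [hrfdef]; unfold lem7rf
      rw [← Finset.sum_sub_distrib]
      refine Finset.sum_congr rfl fun k _ => ?_
      rw [div_eq_mul_inv, div_eq_mul_inv]
      ring
    rw [h1, Finset.sum_mul]
    refine le_trans (Finset.abs_sum_le_sum_abs _ _) (Finset.sum_le_sum fun k _ => ?_)
    have hδ : 0 < sf lam k / 2 := by have := hspos k; linarith
    have hlipk := lem7_sqrt_inv_lip hδ (le_of_lt (hνU k)) (le_of_lt (hν'U k))
    rw [abs_mul, abs_mul]
    calc |c j k| * |η k| * |(Real.sqrt (sf ν k))⁻¹ - (Real.sqrt (sf ν' k))⁻¹|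
        ≤ |c j k| * |η k| *
            (|sf ν k - sf ν' k| / (2 * Real.sqrt (sf lam k / 2) * (sf lam k / 2))) := by
          exact mul_le_mul_of_nonneg_left hlipk (by positivity)
      _ ≤ |c j k| * |η k| *
            ((m * dist ν ν') / (2 * Real.sqrt (sf lam k / 2) * (sf lam k / 2))) := by
          refine mul_le_mul_of_nonneg_left ?_ (by positivity)
          gcongr
          exact hsdiff ν ν' k
      _ = |c j k| * ((m : ℝ) / (2 * Real.sqrt (sf lam k / 2) * (sf lam k / 2))) * |η k|
            * dist ν ν' := by ring
  have hlip : ∀ η, LipschitzOnWith (Real.nnabs (bound η)) (fun ν => F ν η)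
      (Metric.ball lam ε) := by
    intro η
    apply LipschitzOnWith.of_dist_le_mul
    intro ν hν ν' hν'
    rw [Real.dist_eq]
    have hcoe : ((Real.nnabs (bound η) : NNReal) : ℝ) = bound η := by
      rw [Real.coe_nnabs, abs_of_nonneg (hbound_nonneg η)]
    rw [hcoe]
    refine lem7_abs_sup'_sub_sup'_le neU (rf ν η) (rf ν' η) (bound η * dist ν ν') fun j => ?_
    refine le_trans (hrdiff η j ν hν ν' hν') ?_
    refine mul_le_mul_of_nonneg_right ?_ dist_nonneg
    rw [hbdef]
    refine Finset.single_le_sum (f := fun j => ∑ k,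
      |c j k| * ((m : ℝ) / (2 * Real.sqrt (sf lam k / 2) * (sf lam k / 2))) * |η k|)
      (fun j' _ => Finset.sum_nonneg fun k _ => by have := hspos k; positivity)
      (Finset.mem_univ j)
  -- integrability of the Lipschitz bound
  have hint_abs : ∀ k, Integrable (fun η : Fin d → ℝ => |η k|) μ := fun k =>
    lem7_integrable_abs_eval d k
  have hbound_int : Integrable bound μ := by
    rw [hbdef]
    refine MeasureTheory.integrable_finset_sum _ fun j _ =>
      MeasureTheory.integrable_finset_sum _ fun k _ => ?_
    exact (hint_abs k).const_mul _
  -- continuity and integrability of F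
  have hcontF : ∀ ν, Continuous (F ν) := by
    intro ν
    rw [continuous_iff_continuousAt]
    intro η
    exact ContinuousAt.finset_sup'_apply neU fun j _ =>
      (lem7_cont_rf_eta d m x b θb β ν j).continuousAt
  have hFmeas : ∀ᶠ ν in nhds lam, MeasureTheory.AEStronglyMeasurable (F ν) μ :=
    Filter.Eventually.of_forall fun ν => (hcontF ν).aestronglyMeasurable
  have hFint : Integrable (F lam) μ := by
    have hbnd2int : Integrable
        (fun η : Fin d → ℝ => ∑ j : Fin m, ∑ k, |c j k / Real.sqrt (sf lam k)| * |η k|) μ :=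
      MeasureTheory.integrable_finset_sum _ fun j _ =>
        MeasureTheory.integrable_finset_sum _ fun k _ => (hint_abs k).const_mul _
    refine hbnd2int.mono' ((hcontF lam).aestronglyMeasurable)
      (Filter.Eventually.of_forall fun η => ?_)
    rw [Real.norm_eq_abs]
    obtain ⟨j0, _, hj0⟩ := Finset.exists_mem_eq_sup' neU (rf lam η)
    have hFlam : F lam η = rf lam η j0 := hj0
    rw [hFlam]
    have habsr : |rf lam η j0| ≤ ∑ k, |c j0 k / Real.sqrt (sf lam k)| * |η k| := by
      rw [hrfdef]
      unfold lem7rf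
      refine le_trans (Finset.abs_sum_le_sum_abs _ _)
        (le_of_eq (Finset.sum_congr rfl fun k _ => ?_))
      have hterm : lem7cf d m x b θb β j0 k * η k / Real.sqrt (lem7sf d m x lam k) =
          (lem7cf d m x b θb β j0 k / Real.sqrt (lem7sf d m x lam k)) * η k := by ring
      rw [hterm, abs_mul]
    refine le_trans habsr ?_
    refine Finset.single_le_sum (f := fun j => ∑ k, |c j k / Real.sqrt (sf lam k)| * |η k|)
      (fun j' _ => Finset.sum_nonneg fun k _ => by positivity) (Finset.mem_univ j0)
  -- measurability of the selection and of F'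
  have hmeasrf : ∀ j, Measurable fun η => rf lam η j := fun j =>
    (lem7_cont_rf_eta d m x b θb β lam j).measurable
  have hmeasxt : Measurable xt := by
    apply measurable_to_countable'
    intro j
    have hset : xt ⁻¹' {j} = {η | (∀ j', rf lam η j' ≤ rf lam η j) ∧
        ∀ j'', (∀ j', rf lam η j' ≤ rf lam η j'') → j ≤ j''} := by
      ext η
      simp only [Set.mem_preimage, Set.mem_singleton_iff, Set.mem_setOf_eq]
      exact lem7argmax_eq_iff b (rf lam η) j
    rw [hset, Set.setOf_and]
    have h1 : MeasurableSet {η : Fin d → ℝ | ∀ j', rf lam η j' ≤ rf lam η j} := by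
      rw [Set.setOf_forall]
      exact MeasurableSet.iInter fun j' => measurableSet_le (hmeasrf j') (hmeasrf j)
    have h2 : MeasurableSet {η : Fin d → ℝ |
        ∀ j'', (∀ j', rf lam η j' ≤ rf lam η j'') → j ≤ j''} := by
      rw [Set.setOf_forall]
      refine MeasurableSet.iInter fun j'' => ?_
      by_cases hj : j ≤ j''
      · have huniv : {η : Fin d → ℝ | (∀ j', rf lam η j' ≤ rf lam η j'') → j ≤ j''} =
            Set.univ := by
          ext η; simp [hj]
        rw [huniv]; exact MeasurableSet.univ
      · have hcompl : {η : Fin d → ℝ | (∀ j', rf lam η j' ≤ rf lam η j'') → j ≤ j''} =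
            {η : Fin d → ℝ | ∀ j', rf lam η j' ≤ rf lam η j''}ᶜ := by
          ext η; simp [hj]
        rw [hcompl, Set.setOf_forall]
        exact (MeasurableSet.iInter fun j' =>
          measurableSet_le (hmeasrf j') (hmeasrf j'')).compl
    exact h1.inter h2
  have hF'meas : MeasureTheory.AEStronglyMeasurable (fun η => G (xt η) η) μ := by
    have hprod : Measurable fun p : (Fin d → ℝ) × Fin m => lem7G d m x b θb β lam p.2 p.1 :=
      measurable_from_prod_countable_left fun j => lem7_meas_G d m x b θb β lam j
    exact (hprod.comp (measurable_id.prodMk hmeasxt)).aestronglyMeasurable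
  -- differentiation under the integral
  obtain ⟨hGint, hderiv⟩ := hasFDerivAt_integral_of_dominated_loc_of_lip
    (F := F) (F' := fun η => G (xt η) η) (bound := bound)
    (Metric.ball_mem_nhds lam hε) hFmeas hFint hF'meas (MeasureTheory.ae_of_all _ hlip) hbound_int haediff
  -- linear part
  set TL : (Fin m → ℝ) →L[ℝ] ℝ :=
    ∑ j, (τ * ∑ i, θb i * (x b i - x j i)) • ContinuousLinearMap.proj j with hTLdef
  have hTLapp : ∀ ν, TL ν = τ * ∑ j, (∑ i, θb i * (x b i - x j i)) * ν j := by
    intro ν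
    rw [hTLdef]
    simp only [ContinuousLinearMap.coe_sum', Finset.sum_apply, ContinuousLinearMap.coe_smul',
      Pi.smul_apply, ContinuousLinearMap.proj_apply, smul_eq_mul]
    rw [Finset.mul_sum]
    exact Finset.sum_congr rfl fun j _ => by ring
  have hlag : lagrangian d m x b θb β τ = fun ν => TL ν + ∫ η, F ν η ∂μ := by
    funext ν
    unfold lagrangian
    rw [hTLapp]
    congr 1
    exact MeasureTheory.integral_congr_ae (Filter.Eventually.of_forall fun η => hsup ν η)
  have htotal : HasFDerivAt (lagrangian d m x b θb β τ)
      (TL + ∫ η, G (xt η) η ∂μ) lam := by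
    rw [hlag]
    exact TL.hasFDerivAt.add hderiv
  refine ⟨?_, htotal.differentiableAt, xt, ?_, ?_⟩
  · filter_upwards [hane] with η hdist
    refine ⟨xt η, fun j' => ?_, ?_⟩
    · rw [hre, hre]; exact hmaxxt η j'
    · intro y hy
      by_contra hne
      have h1 : rf lam η y ≤ rf lam η (xt η) := hmaxxt η y
      have h2 : rf lam η (xt η) ≤ rf lam η y := by
        have := hy (xt η)
        rw [hre, hre] at this
        exact this
      exact hdist y (xt η) hne (le_antisymm h1 h2)
  · refine MeasureTheory.ae_of_all _ fun η j' => ?_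
    rw [hre, hre]
    exact hmaxxt η j'
  · intro i
    rw [htotal.fderiv, ContinuousLinearMap.add_apply]
    have hTLi : TL (Pi.single i 1) = τ * ∑ k, θb k * (x b k - x i k) := by
      rw [hTLdef]
      simp only [ContinuousLinearMap.coe_sum', Finset.sum_apply, ContinuousLinearMap.coe_smul',
        Pi.smul_apply, ContinuousLinearMap.proj_apply, smul_eq_mul]
      rw [Finset.sum_eq_single i (fun j' _ hji => by rw [Pi.single_eq_of_ne hji]; ring)
        (fun h => absurd (Finset.mem_univ i) h)]
      rw [Pi.single_eq_same]; ring
    have hGi : (∫ η, G (xt η) η ∂μ) (Pi.single i 1) =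
        ∫ η, (G (xt η) η) (Pi.single i 1) ∂μ :=
      ContinuousLinearMap.integral_apply hGint (Pi.single i 1)
    have hGval : ∀ η, (G (xt η) η) (Pi.single i 1) =
        -(1/2) * ((β + ∑ k, θb k * (x b k - x (xt η) k))⁻¹ *
          ∑ k, (x b k - x (xt η) k) * x i k * η k / (∑ l, lam l * x l k) ^ ((3:ℝ)/2)) := fun η =>
      lem7G_single d m x b θb β lam hspos (xt η) i (hgap (xt η)) η
    have hintval : ∫ η, (G (xt η) η) (Pi.single i 1) ∂μ =
        -(1/2) * ∫ η, (β + ∑ k, θb k * (x b k - x (xt η) k))⁻¹ *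
          ∑ k, (x b k - x (xt η) k) * x i k * η k / (∑ l, lam l * x l k) ^ ((3:ℝ)/2) ∂μ := by
      rw [MeasureTheory.integral_congr_ae (Filter.Eventually.of_forall hGval)]
      exact MeasureTheory.integral_const_mul _ _
    rw [hTLi, hGi, hintval]
    ring
end
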